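/- Let g ∈ ℤ[X] be monic separable with root set Z_g ⊂ ℂ. Let H ⊆ (S¹)^{Z_g} be the closed subgroup of functions f : Z_g → S¹ satisfying ∏_{x ∈ Z_g} f(x)^{α(x)} = 1 for every integer-valued α with ∑_x α(x)·x = 0. If U is a random function uniformly distributed (Haar) on H and σ(U) = ∑_{x ∈ Z_g} U(x), then E[|σ(U)|²] = |Z_g|, and E[σ(U)] = 1 if 0 ∈ Z_g and E[σ(U)] = 0 otherwise. -/

import Mathlib

open MeasureTheory
open scoped Classical

lemma integral_char_eq_zero {G : Type*} [Group G] [TopologicalSpace G] [IsTopologicalGroup G]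
    [MeasurableSpace G] [BorelSpace G] (μ : Measure G) [μ.IsMulLeftInvariant]
    (f : G → ℂ) (h : G) (c : ℂ) (hc : c ≠ 1) (hmul : ∀ g, f (h * g) = c * f g) :
    ∫ g, f g ∂μ = 0 := by
  have h1 : ∫ g, f (h * g) ∂μ = ∫ g, f g ∂μ := integral_mul_left_eq_self f h
  simp_rw [hmul, integral_const_mul] at h1
  have := sub_eq_zero.mpr h1
  rw [← sub_one_mul] at this
  rcases mul_eq_zero.mp this with h' | h'
  · exact absurd (sub_eq_zero.mp h') hc
  · exact h'


lemma mem_of_exp (Z : Finset ℂ) (H : Subgroup (↥Z → Circle))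
    (hH : ∀ f : ↥Z → Circle, f ∈ H ↔
      ∀ α : ℂ → ℤ, (∑ x ∈ Z, (α x : ℂ) * x = 0) →
        ∏ x : ↥Z, ((f x : ℂ) ^ (α (x : ℂ))) = 1)
    (c d : ℝ) :
    (fun z : ↥Z => Circle.exp (c * (z : ℂ).re + d * (z : ℂ).im)) ∈ H := by
  rw [hH]
  intro α hα
  have hre : ∑ x ∈ Z, (α x : ℝ) * x.re = 0 := by
    have := congrArg Complex.re hα
    simpa [Complex.re_sum, Complex.mul_re] using this
  have him : ∑ x ∈ Z, (α x : ℝ) * x.im = 0 := by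
    have := congrArg Complex.im hα
    simpa [Complex.im_sum, Complex.mul_im] using this
  calc ∏ x : ↥Z, ((Circle.exp (c * (x : ℂ).re + d * (x : ℂ).im) : ℂ)) ^ (α (x : ℂ))
      = ∏ x : ↥Z, Complex.exp ((α (x : ℂ) : ℂ) * (((c * (x : ℂ).re + d * (x : ℂ).im : ℝ) : ℂ) * Complex.I)) := by
        refine Fintype.prod_congr _ _ fun x => ?_
        rw [Circle.coe_exp, ← Complex.exp_int_mul]
    _ = Complex.exp (∑ x : ↥Z, (α (x : ℂ) : ℂ) * (((c * (x : ℂ).re + d * (x : ℂ).im : ℝ) : ℂ) * Complex.I)) :=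
        (Complex.exp_sum _ _).symm
    _ = 1 := by
        rw [show (∑ x : ↥Z, (α (x : ℂ) : ℂ) * (((c * (x : ℂ).re + d * (x : ℂ).im : ℝ) : ℂ) * Complex.I)) = 0 from ?_,
          Complex.exp_zero]
        have : ∑ x : ↥Z, (α (x : ℂ) : ℂ) * (((c * (x : ℂ).re + d * (x : ℂ).im : ℝ) : ℂ) * Complex.I)
            = ((∑ x ∈ Z, ((α x : ℝ) * (c * x.re + d * x.im) : ℝ) : ℝ) : ℂ) * Complex.I := by
          rw [Finset.sum_coe_sort Z (fun x => (α x : ℂ) * (((c * x.re + d * x.im : ℝ) : ℂ) * Complex.I))]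
          push_cast
          rw [Finset.sum_mul]
          exact Finset.sum_congr rfl fun x _ => by ring
        rw [this]
        have h2 : ∑ x ∈ Z, ((α x : ℝ) * (c * x.re + d * x.im)) = 0 := by
          have : ∑ x ∈ Z, ((α x : ℝ) * (c * x.re + d * x.im))
              = c * (∑ x ∈ Z, (α x : ℝ) * x.re) + d * (∑ x ∈ Z, (α x : ℝ) * x.im) := by
            rw [Finset.mul_sum, Finset.mul_sum, ← Finset.sum_add_distrib]
            exact Finset.sum_congr rfl fun x _ => by ring
          rw [this, hre, him]; ring
        rw [h2]; simp

lemma eval_zero_eq_one (Z : Finset ℂ) (H : Subgroup (↥Z → Circle))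
    (hH : ∀ f : ↥Z → Circle, f ∈ H ↔
      ∀ α : ℂ → ℤ, (∑ x ∈ Z, (α x : ℂ) * x = 0) →
        ∏ x : ↥Z, ((f x : ℂ) ^ (α (x : ℂ))) = 1)
    (h0 : (0 : ℂ) ∈ Z) (f : ↥Z → Circle) (hf : f ∈ H) :
    (f ⟨0, h0⟩ : ℂ) = 1 := by
  have := (hH f).mp hf (fun z => if z = 0 then 1 else 0) ?_
  · rw [← this]
    symm
    refine Fintype.prod_eq_single ⟨0, h0⟩ (fun x hx => ?_) |>.trans ?_
    · have : (x : ℂ) ≠ 0 := fun h => hx (Subtype.ext h)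
      simp [this]
    · simp
  · refine Finset.sum_eq_zero fun x _ => ?_
    by_cases h : x = 0 <;> simp [h]

/-- moments of σ(U) = ∑_x U(x) for U Haar-uniform on the subgroup
H of (S¹)^{Z_g} orthogonal to the module of additive relations of g:
E[|σ(U)|²] = |Z_g| and E[σ(U)] = 1 or 0 according as 0 ∈ Z_g or not. -/
theorem stmt_8 (g : Polynomial ℤ) (hmonic : g.Monic) (hsep : g.Separable)
    (Z : Finset ℂ) (hZ : ∀ z : ℂ, z ∈ Z ↔ Polynomial.aeval z g = 0)
    (H : Subgroup (↥Z → Circle))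
    (hH : ∀ f : ↥Z → Circle, f ∈ H ↔
      ∀ α : ℂ → ℤ, (∑ x ∈ Z, (α x : ℂ) * x = 0) →
        ∏ x : ↥Z, ((f x : ℂ) ^ (α (x : ℂ))) = 1)
    [MeasurableSpace ↥H] [BorelSpace ↥H]
    (μ : Measure ↥H) [μ.IsHaarMeasure] [IsProbabilityMeasure μ] :
    (∫ f : ↥H, ‖∑ x : ↥Z, (((f : ↥Z → Circle) x : ℂ))‖ ^ 2 ∂μ) = (Z.card : ℝ) ∧
    (∫ f : ↥H, (∑ x : ↥Z, (((f : ↥Z → Circle) x : ℂ))) ∂μ)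
      = if (0 : ℂ) ∈ Z then 1 else 0 := by
  have hmem := mem_of_exp Z H hH
  have hzero := eval_zero_eq_one Z H hH
  clear hH hZ hmonic hsep
  -- continuity of evaluation
  have contx : ∀ x : ↥Z, Continuous fun g : ↥H => ((g : ↥Z → Circle) x : ℂ) := fun x =>
    continuous_subtype_val.comp ((continuous_apply x).comp continuous_subtype_val)
  -- construct nontrivial element of H separating two distinct roots
  have hsep : ∀ w : ℂ, w ≠ 0 → ∃ c d : ℝ, c * w.re + d * w.im = Real.pi := by
    intro w hw
    by_cases hre : w.re = 0
    · have him : w.im ≠ 0 := fun h => hw (Complex.ext hre h)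
      exact ⟨0, Real.pi / w.im, by field_simp; ring⟩
    · exact ⟨Real.pi / w.re, 0, by field_simp; ring⟩
  -- value of the constructed element
  have hval : ∀ (c d : ℝ) (x : ↥Z),
      ((Circle.exp (c * (x : ℂ).re + d * (x : ℂ).im) : Circle) : ℂ)
        = Complex.exp (((c * (x : ℂ).re + d * (x : ℂ).im : ℝ) : ℂ) * Complex.I) := fun c d x =>
    Circle.coe_exp _
  -- second-moment characters
  have hchar2 : ∀ x y : ↥Z,
      (∫ g : ↥H, ((g : ↥Z → Circle) x : ℂ) * (starRingEnd ℂ) ((g : ↥Z → Circle) y) ∂μ)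
        = if x = y then 1 else 0 := by
    intro x y
    by_cases hxy : x = y
    · subst hxy
      simp only [if_pos rfl]
      have : ∀ g : ↥H, ((g : ↥Z → Circle) x : ℂ) * (starRingEnd ℂ) ((g : ↥Z → Circle) x) = 1 := by
        intro g
        rw [Complex.mul_conj]
        norm_cast
        simp
      simp_rw [this]
      simp
    · rw [if_neg hxy]
      have hw : ((x : ℂ) - y) ≠ 0 := sub_ne_zero.mpr (fun h => hxy (Subtype.ext h))
      obtain ⟨c, d, hcd⟩ := hsep _ hw
      set h : ↥H := ⟨fun z : ↥Z => Circle.exp (c * (z : ℂ).re + d * (z : ℂ).im), hmem c d⟩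
      have hval2 : ((h : ↥Z → Circle) x : ℂ) * (starRingEnd ℂ) ((h : ↥Z → Circle) y) = -1 := by
        show ((Circle.exp _ : Circle) : ℂ) * (starRingEnd ℂ) ((Circle.exp _ : Circle) : ℂ) = -1
        rw [hval, hval, ← Complex.exp_conj, map_mul, Complex.conj_I, Complex.conj_ofReal,
          ← Complex.exp_add]
        rw [show (((c * (x : ℂ).re + d * (x : ℂ).im : ℝ) : ℂ) * Complex.I +
            ((c * (y : ℂ).re + d * (y : ℂ).im : ℝ) : ℂ) * -Complex.I)
            = ((c * ((x:ℂ).re - (y:ℂ).re) + d * ((x:ℂ).im - (y:ℂ).im) : ℝ) : ℂ) * Complex.I by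
          push_cast; ring]
        rw [show (c * ((x:ℂ).re - (y:ℂ).re) + d * ((x:ℂ).im - (y:ℂ).im)) = Real.pi by
          rw [← hcd, Complex.sub_re, Complex.sub_im]]
        exact Complex.exp_pi_mul_I
      refine integral_char_eq_zero μ _ h (-1) (by norm_num) fun g => ?_
      rw [← hval2]
      have : ((h * g : ↥H) : ↥Z → Circle) = (h : ↥Z → Circle) * (g : ↥Z → Circle) := rfl
      rw [this]
      simp only [Pi.mul_apply]
      push_cast
      rw [map_mul]
      ring
  -- first-moment characters
  have hchar1 : ∀ x : ↥Z,
      (∫ g : ↥H, ((g : ↥Z → Circle) x : ℂ) ∂μ) = if (x : ℂ) = 0 then 1 else 0 := by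
    intro x
    by_cases hx : (x : ℂ) = 0
    · rw [if_pos hx]
      have h0 : (0 : ℂ) ∈ Z := hx ▸ x.2
      have : ∀ g : ↥H, ((g : ↥Z → Circle) x : ℂ) = 1 := by
        intro g
        have := hzero h0 (g : ↥Z → Circle) g.2
        rwa [show (⟨0, h0⟩ : ↥Z) = x from Subtype.ext hx.symm] at this
      simp_rw [this]; simp
    · rw [if_neg hx]
      obtain ⟨c, d, hcd⟩ := hsep _ hx
      set h : ↥H := ⟨fun z : ↥Z => Circle.exp (c * (z : ℂ).re + d * (z : ℂ).im), hmem c d⟩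
      have hval1 : ((h : ↥Z → Circle) x : ℂ) = -1 := by
        show ((Circle.exp _ : Circle) : ℂ) = -1
        rw [hval, show (c * (x : ℂ).re + d * (x : ℂ).im) = Real.pi from hcd]
        exact Complex.exp_pi_mul_I
      refine integral_char_eq_zero μ _ h (-1) (by norm_num) fun g => ?_
      rw [← hval1]
      have : ((h * g : ↥H) : ↥Z → Circle) = (h : ↥Z → Circle) * (g : ↥Z → Circle) := rfl
      rw [this]
      simp only [Pi.mul_apply]
      push_cast
      ring
  -- integrability
  have hint1 : ∀ x : ↥Z, Integrable (fun g : ↥H => ((g : ↥Z → Circle) x : ℂ)) μ := by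
    intro x
    refine Integrable.mono' (integrable_const 1) ((contx x).aestronglyMeasurable)
      (Filter.Eventually.of_forall fun g => ?_)
    simp [Circle.norm_coe]
  have hint2 : ∀ x y : ↥Z, Integrable
      (fun g : ↥H => ((g : ↥Z → Circle) x : ℂ) * (starRingEnd ℂ) ((g : ↥Z → Circle) y)) μ := by
    intro x y
    refine Integrable.mono' (integrable_const 1)
      (((contx x).mul (continuous_star.comp (contx y))).aestronglyMeasurable)
      (Filter.Eventually.of_forall fun g => ?_)
    simp [Circle.norm_coe]
  constructor
  · -- second moment
    have hsq : ∀ g : ↥H, ‖∑ x : ↥Z, ((g : ↥Z → Circle) x : ℂ)‖ ^ 2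
        = (∑ x : ↥Z, ∑ y : ↥Z,
            ((g : ↥Z → Circle) x : ℂ) * (starRingEnd ℂ) ((g : ↥Z → Circle) y)).re := by
      intro g
      have hexp : (∑ x : ↥Z, ((g : ↥Z → Circle) x : ℂ)) *
          (starRingEnd ℂ) (∑ y : ↥Z, ((g : ↥Z → Circle) y : ℂ))
          = ∑ x : ↥Z, ∑ y : ↥Z,
            ((g : ↥Z → Circle) x : ℂ) * (starRingEnd ℂ) ((g : ↥Z → Circle) y) := by
        rw [map_sum, Finset.sum_mul_sum]
      rw [← hexp, Complex.mul_conj, Complex.ofReal_re, ← Complex.sq_norm]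
    simp_rw [hsq]
    have hFint : Integrable (fun g : ↥H => ∑ x : ↥Z, ∑ y : ↥Z,
        ((g : ↥Z → Circle) x : ℂ) * (starRingEnd ℂ) ((g : ↥Z → Circle) y)) μ := by
      apply integrable_finset_sum
      intro x _
      exact integrable_finset_sum _ fun y _ => hint2 x y
    have := _root_.integral_re (𝕜 := ℂ) hFint
    simp only [RCLike.re_to_complex] at this
    rw [this]
    rw [integral_finset_sum _ fun x _ => integrable_finset_sum _ fun y _ => hint2 x y]
    have : ∀ x : ↥Z, (∫ g : ↥H, ∑ y : ↥Z,
        ((g : ↥Z → Circle) x : ℂ) * (starRingEnd ℂ) ((g : ↥Z → Circle) y) ∂μ)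
        = ∑ y : ↥Z, if x = y then (1:ℂ) else 0 := by
      intro x
      rw [integral_finset_sum _ fun y _ => hint2 x y]
      exact Finset.sum_congr rfl fun y _ => hchar2 x y
    simp_rw [this]
    simp [Finset.sum_ite_eq, Fintype.card_coe]
  · -- first moment
    rw [integral_finset_sum _ fun x _ => hint1 x]
    simp_rw [hchar1]
    rw [Finset.sum_coe_sort Z (fun z => if z = 0 then (1:ℂ) else 0)]
    rw [Finset.sum_ite_eq' Z 0 (fun _ => (1:ℂ))]
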